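/- Let G be a finite simple graph and let v and w be two adjacent vertices of G. Suppose that (i) the independence polynomial p(G,x) is LC+, and (ii) for every q in [0,1] the polynomial p(G,x)^2 - 4q x^2 p(G - N[v], x) p(G - N[w], x) is LC+. Then for every n ≥ 1 the coefficient sequence of the independence polynomial of the n-concatenation G^n(v,w) (i.e. the independent set sequence of G^n(v,w)) is log-concave. -/

import Mathlib

open Finset Polynomial
open scoped Classical

/-- A finset of vertices is an independent set: pairwise non-adjacent. -/
def IsIndepFinset {V : Type*} (G : SimpleGraph V) (s : Finset V) : Prop :=
  ∀ a ∈ s, ∀ b ∈ s, ¬ G.Adj a b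

/-- `indepCount G t` is the number of independent sets of size `t` in `G`. -/
noncomputable def indepCount {V : Type*} [Fintype V] (G : SimpleGraph V) (t : ℕ) : ℕ :=
  ((Finset.univ : Finset (Finset V)).filter (fun s => IsIndepFinset G s ∧ s.card = t)).card

/-- The independence polynomial of `G`, as a real polynomial:
`p(G,x) = ∑_t i_G(t) x^t`, i.e. the sum of `x^|s|` over all independent sets `s` of `G`. -/
noncomputable def indepPoly {V : Type*} [Fintype V] (G : SimpleGraph V) : Polynomial ℝ :=
  ∑ s ∈ (Finset.univ : Finset (Finset V)).filter (fun s => IsIndepFinset G s),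
    (X : Polynomial ℝ) ^ s.card

/-- A real polynomial is LC⁺ if its coefficients up to its degree are positive and form a
log-concave sequence. -/
def LCPlus (p : Polynomial ℝ) : Prop :=
  (∀ i ≤ p.natDegree, 0 < p.coeff i) ∧
  ∀ k : ℕ, p.coeff k * p.coeff (k + 2) ≤ p.coeff (k + 1) ^ 2

/-- A sequence of naturals is unimodal: it rises to some mode `m` and falls thereafter. -/
def UnimodalNat (a : ℕ → ℕ) : Prop :=
  ∃ m : ℕ, (∀ i j : ℕ, i ≤ j → j ≤ m → a i ≤ a j) ∧ (∀ i j : ℕ, m ≤ i → i ≤ j → a j ≤ a i)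

/-- The `n`-concatenation `G^n(v,w)`: `n` disjoint copies of `G`, with the vertex `w` of the
`i`th copy joined to the vertex `v` of the `(i+1)`st copy. -/
def concat {V : Type*} (G : SimpleGraph V) (v w : V) (n : ℕ) :
    SimpleGraph (V × Fin n) :=
  SimpleGraph.fromRel (fun p q =>
    (p.2 = q.2 ∧ G.Adj p.1 q.1) ∨ (p.1 = w ∧ q.1 = v ∧ (p.2 : ℕ) + 1 = (q.2 : ℕ)))

/-- `G - N[u]`: the induced subgraph of `G` on the vertices outside the closed neighborhood
of `u`. -/
def delNbhd {V : Type*} (G : SimpleGraph V) (u : V) :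
    SimpleGraph {x : V // ¬ (x = u ∨ G.Adj u x)} :=
  G.comap Subtype.val


open scoped Real

section Aux

noncomputable def zc (p : Polynomial ℝ) : ℤ → ℝ := fun k => if 0 ≤ k then p.coeff k.toNat else 0

lemma zc_nonneg {p : Polynomial ℝ} (hp : LCPlus p) (k : ℤ) : 0 ≤ zc p k := by
  unfold zc
  split_ifs with h
  · rcases le_or_gt (k.toNat) p.natDegree with h2 | h2
    · exact (hp.1 _ h2).le
    · simp [Polynomial.coeff_eq_zero_of_natDegree_lt h2]
  · exact le_refl 0

lemma zc_lc {p : Polynomial ℝ} (hp : LCPlus p) (m : ℤ) :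
    zc p (m - 1) * zc p (m + 1) ≤ zc p m ^ 2 := by
  rcases lt_or_ge m 1 with h | h
  · have : zc p (m - 1) = 0 := by unfold zc; rw [if_neg]; omega
    rw [this, zero_mul]
    positivity -- might fail; zc p m ^2 ≥ 0
  · obtain ⟨k, rfl⟩ : ∃ k : ℕ, m = (k : ℤ) + 1 := ⟨(m - 1).toNat, by omega⟩
    have h1 : ((k:ℤ) + 1 - 1).toNat = k := by omega
    have h2 : ((k:ℤ) + 1 + 1).toNat = k + 2 := by omega
    have h3 : ((k:ℤ) + 1).toNat = k + 1 := by omega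
    unfold zc
    rw [if_pos (by omega), if_pos (by omega), if_pos (by omega), h1, h2, h3]
    exact hp.2 k

lemma zc_tp2 {p : Polynomial ℝ} (hp : LCPlus p) :
    ∀ s t : ℤ, s ≤ t → zc p (s - 1) * zc p t ≤ zc p s * zc p (t - 1) := by
  have key : ∀ d : ℕ, ∀ s t : ℤ, t - s = d → zc p (s - 1) * zc p t ≤ zc p s * zc p (t - 1) := by
    intro d
    induction d with
    | zero => intro s t h; have : s = t := by omega
              subst this; rw [mul_comm]
    | succ d ih =>
      intro s t h
      rcases eq_or_lt_of_le (zc_nonneg hp (s-1)) with hs | hs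
      · rw [← hs, zero_mul]; exact mul_nonneg (zc_nonneg hp _) (zc_nonneg hp _)
      rcases eq_or_lt_of_le (zc_nonneg hp t) with ht | ht
      · rw [← ht, mul_zero]; exact mul_nonneg (zc_nonneg hp _) (zc_nonneg hp _)
      -- s - 1 ≥ 0 and t ≤ natDegree
      have hs0 : (0:ℤ) ≤ s - 1 := by
        by_contra hc; push_neg at hc
        have : zc p (s-1) = 0 := by unfold zc; rw [if_neg]; omega
        rw [this] at hs; exact lt_irrefl _ hs
      have htd : (t:ℤ) ≤ (p.natDegree : ℤ) ∧ 0 ≤ t := by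
        constructor
        · by_contra hc; push_neg at hc
          have : zc p t = 0 := by
            unfold zc; rw [if_pos (by omega)]
            exact Polynomial.coeff_eq_zero_of_natDegree_lt (by omega)
          rw [this] at ht; exact lt_irrefl _ ht
        · omega
      have htm1 : 0 < zc p (t - 1) := by
        have h1 : (0:ℤ) ≤ t - 1 := by omega
        unfold zc; rw [if_pos h1]
        exact hp.1 _ (by omega)
      have ihst := ih s (t - 1) (by omega)
      have lc := zc_lc hp (t - 1)
      have e1 : t - 1 - 1 = t - 2 := by ring
      have e2 : t - 1 + 1 = t := by ring
      rw [e1, e2] at lc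
      -- (zc(s-1) zc t) * zc(t-1) ≤ (zc s * zc(t-1)) * zc(t-1)
      have step : zc p (s-1) * zc p t * zc p (t-1) ≤ zc p s * zc p (t-1) * zc p (t-1) := by
        calc zc p (s-1) * zc p t * zc p (t-1)
            = (zc p (s-1) * zc p (t-1)) * zc p t := by ring
          _ ≤ (zc p s * zc p (t-2)) * zc p t := by
              apply mul_le_mul_of_nonneg_right _ (zc_nonneg hp t)
              have := ihst; rw [e1] at this; exact this
          _ = zc p s * (zc p (t-2) * zc p t) := by ring
          _ ≤ zc p s * (zc p (t-1))^2 := by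
              apply mul_le_mul_of_nonneg_left lc (zc_nonneg hp s)
          _ = zc p s * zc p (t-1) * zc p (t-1) := by ring
      exact le_of_mul_le_mul_right step htm1
  intro s t h
  exact key (t - s).toNat s t (by omega)

lemma zc_natCast (p : Polynomial ℝ) (k : ℕ) : zc p (k : ℤ) = p.coeff k := by
  unfold zc; rw [if_pos (Int.natCast_nonneg k), Int.toNat_natCast]

lemma zc_mul (p q : Polynomial ℝ) (m : ℤ) (hm : 0 ≤ m) (I : Finset ℤ)
    (hI : Finset.Icc 0 m ⊆ I) :
    zc (p * q) m = ∑ s ∈ I, zc p s * zc q (m - s) := by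
  have h1 : ∑ s ∈ I, zc p s * zc q (m - s) = ∑ s ∈ Finset.Icc 0 m, zc p s * zc q (m - s) := by
    apply (Finset.sum_subset hI ?_).symm
    intro s hs hns
    rw [Finset.mem_Icc] at hns
    push_neg at hns
    rcases lt_or_ge s 0 with h | h
    · have : zc p s = 0 := by unfold zc; rw [if_neg (by omega)]
      rw [this, zero_mul]
    · have : zc q (m - s) = 0 := by unfold zc; rw [if_neg (by omega)]
      rw [this, mul_zero]
  rw [h1]
  have hm' : m = (m.toNat : ℤ) := by omega
  have h2 : zc (p * q) m = (p * q).coeff m.toNat := by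
    unfold zc; rw [if_pos hm]
  rw [h2, Polynomial.coeff_mul]
  rw [Finset.Nat.sum_antidiagonal_eq_sum_range_succ_mk]
  apply Finset.sum_nbij' (i := fun s : ℕ => (s : ℤ)) (j := fun s : ℤ => s.toNat)
  · intro s hs; rw [Finset.mem_range] at hs; rw [Finset.mem_Icc]; omega
  · intro s hs; rw [Finset.mem_Icc] at hs; simp only [Finset.mem_range]; omega
  · intro s hs; simp
  · intro s hs; rw [Finset.mem_Icc] at hs; omega
  · intro s hs
    rw [Finset.mem_range] at hs
    have e1 : zc p (s : ℤ) = p.coeff s := zc_natCast p s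
    have e2 : zc q (m - s) = q.coeff (m.toNat - s) := by
      unfold zc; rw [if_pos (by omega)]
      congr 1; omega
    rw [e1, e2]

lemma zc_mul_shift (p q : Polynomial ℝ) (m : ℤ) (hm : 0 ≤ m) (I : Finset ℤ)
    (hI : ∀ s : ℤ, 0 ≤ s → s ≤ m → s + 1 ∈ I) :
    zc (p * q) m = ∑ s ∈ I, zc p (s - 1) * zc q (m + 1 - s) := by
  have h1 : ∑ s ∈ I, zc p (s - 1) * zc q (m + 1 - s)
      = ∑ s ∈ I.image (· - 1), zc p s * zc q (m - s) := by
    rw [Finset.sum_image (by intro a _ b _ h; have h' : a - 1 = b - 1 := h; omega)]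
    apply Finset.sum_congr rfl
    intro s _
    congr 1
    congr 1
    omega
  rw [h1]
  apply zc_mul p q m hm
  intro s hs
  rw [Finset.mem_Icc] at hs
  simp only [Finset.mem_image]
  exact ⟨s + 1, hI s hs.1 hs.2, by omega⟩

lemma LCPlus_coeff_lc {p q : Polynomial ℝ} (hp : LCPlus p) (hq : LCPlus q) (k : ℕ) :
    (p * q).coeff k * (p * q).coeff (k + 2) ≤ (p * q).coeff (k + 1) ^ 2 := by
  set a := zc p with ha
  set b := zc q with hb
  set I : Finset ℤ := Finset.Icc (-1 : ℤ) (k + 3) with hI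
  have hc1 : zc (p * q) ((k : ℤ) + 1) = ∑ s ∈ I, a s * b ((k : ℤ) + 1 - s) := by
    apply zc_mul p q _ (by omega)
    intro s hs; rw [Finset.mem_Icc] at hs ⊢; omega
  have hc1' : zc (p * q) ((k : ℤ) + 1) = ∑ t ∈ I, a (t - 1) * b ((k : ℤ) + 2 - t) := by
    have := zc_mul_shift p q ((k : ℤ) + 1) (by omega) I
      (fun s h1 h2 => by rw [Finset.mem_Icc]; omega)
    rw [this]
    apply Finset.sum_congr rfl; intro t _; congr 2
  have hc0 : zc (p * q) (k : ℤ) = ∑ t ∈ I, a (t - 1) * b ((k : ℤ) + 1 - t) := by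
    have := zc_mul_shift p q (k : ℤ) (by omega) I
      (fun s h1 h2 => by rw [Finset.mem_Icc]; omega)
    rw [this]
  have hc2 : zc (p * q) ((k : ℤ) + 2) = ∑ t ∈ I, a t * b ((k : ℤ) + 2 - t) := by
    apply zc_mul p q _ (by omega)
    intro s hs; rw [Finset.mem_Icc] at hs ⊢; omega
  -- the difference
  set F : ℤ × ℤ → ℝ := fun x =>
    (a x.1 * a (x.2 - 1) - a (x.1 - 1) * a x.2) * (b ((k:ℤ) + 1 - x.1) * b ((k:ℤ) + 2 - x.2))
    with hF
  have key : zc (p * q) ((k:ℤ)+1) ^ 2 - zc (p * q) (k:ℤ) * zc (p * q) ((k:ℤ)+2)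
      = ∑ x ∈ I ×ˢ I, F x := by
    rw [pow_two]
    nth_rewrite 1 [hc1]
    nth_rewrite 1 [hc1']
    rw [hc0, hc2, Finset.sum_mul_sum, Finset.sum_mul_sum, ← Finset.sum_sub_distrib]
    rw [Finset.sum_product]
    apply Finset.sum_congr rfl; intro s _
    rw [← Finset.sum_sub_distrib]
    apply Finset.sum_congr rfl; intro t _
    simp only [hF]
    ring
  have hnn : 0 ≤ ∑ x ∈ I ×ˢ I, F x := by
    have split1 : ∑ x ∈ I ×ˢ I, F x
        = ∑ x ∈ (I ×ˢ I).filter (fun x => x.1 < x.2), F x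
          + ∑ x ∈ (I ×ˢ I).filter (fun x => ¬ x.1 < x.2), F x :=
      (Finset.sum_filter_add_sum_filter_not _ _ _).symm
    have split2 : ∑ x ∈ (I ×ˢ I).filter (fun x => ¬ x.1 < x.2), F x
        = ∑ x ∈ ((I ×ˢ I).filter (fun x => ¬ x.1 < x.2)).filter (fun x => x.1 = x.2), F x
          + ∑ x ∈ ((I ×ˢ I).filter (fun x => ¬ x.1 < x.2)).filter (fun x => ¬ x.1 = x.2), F x :=
      (Finset.sum_filter_add_sum_filter_not _ _ _).symm
    have diag : ∑ x ∈ ((I ×ˢ I).filter (fun x => ¬ x.1 < x.2)).filter (fun x => x.1 = x.2), F x = 0 := by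
      apply Finset.sum_eq_zero
      intro x hx
      simp only [Finset.mem_filter] at hx
      have : x.1 = x.2 := hx.2
      simp only [hF, this]
      ring
    have gtpart : ∑ x ∈ ((I ×ˢ I).filter (fun x => ¬ x.1 < x.2)).filter (fun x => ¬ x.1 = x.2), F x
        = ∑ x ∈ (I ×ˢ I).filter (fun x => x.1 < x.2), F x.swap := by
      apply Finset.sum_nbij' (i := Prod.swap) (j := Prod.swap)
      · rintro ⟨s, t⟩ hx
        simp only [Finset.mem_filter, Finset.mem_product, Prod.swap_prod_mk] at hx ⊢
        obtain ⟨⟨⟨h1, h2⟩, h3⟩, h4⟩ := hx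
        exact ⟨⟨h2, h1⟩, by omega⟩
      · rintro ⟨s, t⟩ hx
        simp only [Finset.mem_filter, Finset.mem_product, Prod.swap_prod_mk] at hx ⊢
        obtain ⟨⟨h1, h2⟩, h3⟩ := hx
        exact ⟨⟨⟨h2, h1⟩, by omega⟩, by omega⟩
      · rintro ⟨s, t⟩ _; rfl
      · rintro ⟨s, t⟩ _; rfl
      · rintro ⟨s, t⟩ _; rfl
    rw [split1, split2, diag, gtpart]
    rw [zero_add, ← Finset.sum_add_distrib]
    apply Finset.sum_nonneg
    intro x hx
    simp only [Finset.mem_filter] at hx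
    have hlt : x.1 < x.2 := hx.2
    set s := x.1; set t := x.2
    have e : F x + F x.swap
        = (a s * a (t - 1) - a (s - 1) * a t)
          * (b ((k:ℤ) + 1 - s) * b ((k:ℤ) + 2 - t) - b ((k:ℤ) + 1 - t) * b ((k:ℤ) + 2 - s)) := by
      simp only [hF, Prod.fst_swap, Prod.snd_swap]
      ring
    rw [e]
    apply mul_nonneg
    · rw [sub_nonneg]
      exact zc_tp2 hp s t hlt.le
    · rw [sub_nonneg]
      have := zc_tp2 hq ((k:ℤ) + 2 - t) ((k:ℤ) + 2 - s) (by omega)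
      calc b ((k:ℤ) + 1 - t) * b ((k:ℤ) + 2 - s)
          = b ((k:ℤ) + 2 - t - 1) * b ((k:ℤ) + 2 - s) := by ring_nf
        _ ≤ b ((k:ℤ) + 2 - t) * b ((k:ℤ) + 2 - s - 1) := this
        _ = b ((k:ℤ) + 1 - s) * b ((k:ℤ) + 2 - t) := by ring_nf
  have final : zc (p*q) (k:ℤ) * zc (p*q) ((k:ℤ)+2) ≤ zc (p*q) ((k:ℤ)+1)^2 := by linarith [key ▸ hnn]
  have e0 : zc (p*q) (k:ℤ) = (p*q).coeff k := zc_natCast _ _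
  have e1 : zc (p*q) ((k:ℤ)+1) = (p*q).coeff (k+1) := by
    rw [show (k:ℤ)+1 = ((k+1 : ℕ) : ℤ) by push_cast; ring]; exact zc_natCast _ _
  have e2 : zc (p*q) ((k:ℤ)+2) = (p*q).coeff (k+2) := by
    rw [show (k:ℤ)+2 = ((k+2 : ℕ) : ℤ) by push_cast; ring]; exact zc_natCast _ _
  rw [e0, e1, e2] at final
  exact final

lemma LCPlus.ne_zero {p : Polynomial ℝ} (hp : LCPlus p) : p ≠ 0 := by
  intro h
  have := hp.1 0 (by simp)
  rw [h] at this; simp at this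

lemma LCPlus.coeff_nonneg {p : Polynomial ℝ} (hp : LCPlus p) (i : ℕ) : 0 ≤ p.coeff i := by
  rcases le_or_gt i p.natDegree with h | h
  · exact (hp.1 i h).le
  · rw [Polynomial.coeff_eq_zero_of_natDegree_lt h]

lemma LCPlus.mul {p q : Polynomial ℝ} (hp : LCPlus p) (hq : LCPlus q) : LCPlus (p * q) := by
  constructor
  · intro i hi
    rw [Polynomial.natDegree_mul hp.ne_zero hq.ne_zero] at hi
    rw [Polynomial.coeff_mul]
    -- pick the witness index
    set j : ℕ := min i p.natDegree with hj
    have hjle : j ≤ i := min_le_left _ _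
    have hmem : (j, i - j) ∈ Finset.HasAntidiagonal.antidiagonal i := by
      rw [Finset.HasAntidiagonal.mem_antidiagonal]; omega
    have hpos : 0 < p.coeff j * q.coeff (i - j) := by
      apply mul_pos
      · exact hp.1 j (min_le_right _ _)
      · apply hq.1
        omega
    calc (0:ℝ) < p.coeff j * q.coeff (i - j) := hpos
      _ ≤ ∑ x ∈ Finset.HasAntidiagonal.antidiagonal i, p.coeff x.1 * q.coeff x.2 := by
          apply Finset.single_le_sum (f := fun x : ℕ × ℕ => p.coeff x.1 * q.coeff x.2) _ hmem
          intro x _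
          exact mul_nonneg (hp.coeff_nonneg _) (hq.coeff_nonneg _)
  · exact LCPlus_coeff_lc hp hq

lemma LCPlus.one : LCPlus (1 : Polynomial ℝ) := by
  constructor
  · intro i hi
    simp only [Polynomial.natDegree_one, Nat.le_zero] at hi
    simp [hi]
  · intro k
    simp only [Polynomial.coeff_one]
    split_ifs <;> norm_num

lemma LCPlus.prod {ι : Type*} (s : Finset ι) (f : ι → Polynomial ℝ)
    (h : ∀ i ∈ s, LCPlus (f i)) : LCPlus (∏ i ∈ s, f i) := by
  classical
  induction s using Finset.induction_on with
  | empty => simpa using LCPlus.one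
  | @insert a s' hx ih =>
    rw [Finset.prod_insert hx]
    exact LCPlus.mul (h a (Finset.mem_insert_self a s'))
      (ih (fun i hi => h i (Finset.mem_insert_of_mem hi)))

noncomputable def cheb (β γ : ℂ) : ℕ → ℂ
  | 0 => 1
  | 1 => β
  | (n+2) => β * cheb β γ (n+1) - γ * cheb β γ n

noncomputable def Pu (γ : ℂ) : ℕ → Polynomial ℂ
  | 0 => 1
  | 1 => X
  | (n+2) => X * Pu γ (n+1) - C γ * Pu γ n

lemma two_step {P : ℕ → Prop} (h0 : P 0) (h1 : P 1)
    (hstep : ∀ n, P n → P (n+1) → P (n+2)) : ∀ n, P n := by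
  have key : ∀ n, P n ∧ P (n+1) := by
    intro n
    induction n with
    | zero => exact ⟨h0, h1⟩
    | succ m ih => exact ⟨ih.2, hstep m ih.1 ih.2⟩
  exact fun n => (key n).1

lemma eval_Pu (γ : ℂ) : ∀ n, ∀ β : ℂ, eval β (Pu γ n) = cheb β γ n := by
  apply two_step (P := fun n => ∀ β : ℂ, eval β (Pu γ n) = cheb β γ n)
  · intro β; simp [Pu, cheb]
  · intro β; simp [Pu, cheb]
  · intro n ih1 ih2 β
    show eval β (X * Pu γ (n+1) - C γ * Pu γ n) = β * cheb β γ (n+1) - γ * cheb β γ n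
    simp [ih1, ih2]

lemma sin_helper (a b : ℂ) :
    Complex.sin (a + b) + Complex.sin (a - b) = 2 * Complex.sin a * Complex.cos b := by
  rw [Complex.sin_add, Complex.sin_sub]; ring

lemma sinid (δ : ℂ) (θ : ℂ) :
    ∀ m : ℕ, eval (2*δ*Complex.cos θ) (Pu (δ^2) m) * Complex.sin θ
      = δ^m * Complex.sin ((m+1)*θ) := by
  apply two_step
  · simp [Pu]
  · have h2 : ((1:ℕ):ℂ) + 1 = 2 := by norm_num
    simp only [Pu, eval_X, h2, pow_one, Complex.sin_two_mul]
    ring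
  · intro m ih1 ih2
    show eval (2*δ*Complex.cos θ) (X * Pu (δ^2) (m+1) - C (δ^2) * Pu (δ^2) m) * Complex.sin θ = _
    have expand : eval (2*δ*Complex.cos θ) (X * Pu (δ^2) (m+1) - C (δ^2) * Pu (δ^2) m) * Complex.sin θ
        = 2*δ*Complex.cos θ * (eval (2*δ*Complex.cos θ) (Pu (δ^2) (m+1)) * Complex.sin θ)
          - δ^2 * (eval (2*δ*Complex.cos θ) (Pu (δ^2) m) * Complex.sin θ) := by
      simp; ring
    rw [expand, ih1, ih2]
    have key := sin_helper (((m:ℂ)+2)*θ) θ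
    have e1 : ((m:ℂ)+2)*θ + θ = (((m+2:ℕ):ℂ)+1)*θ := by push_cast; ring
    have e2 : ((m:ℂ)+2)*θ - θ = ((m:ℂ)+1)*θ := by ring
    have e3 : ((m:ℂ)+2)*θ = (((m+1:ℕ):ℂ)+1)*θ := by push_cast; ring
    rw [e1, e2, e3] at key
    have : Complex.sin ((((m+2:ℕ):ℂ)+1)*θ)
        = 2 * Complex.sin ((((m+1:ℕ):ℂ)+1)*θ) * Complex.cos θ - Complex.sin (((m:ℂ)+1)*θ) := by
      rw [← key]; ring
    rw [this]
    push_cast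
    ring

lemma Pu_monic (γ : ℂ) : ∀ n, (Pu γ n).Monic ∧ (Pu γ n).natDegree = n := by
  apply two_step
  · constructor
    · exact monic_one
    · simp [Pu]
  · constructor
    · exact monic_X
    · simp [Pu]
  · intro n ⟨ih1m, ih1d⟩ ⟨ih2m, ih2d⟩
    show (X * Pu γ (n+1) - C γ * Pu γ n).Monic ∧ (X * Pu γ (n+1) - C γ * Pu γ n).natDegree = n + 2
    have hm : (X * Pu γ (n+1)).Monic := monic_X.mul ih2m
    have hd : (X * Pu γ (n+1)).natDegree = n + 2 := by
      rw [natDegree_mul X_ne_zero ih2m.ne_zero, natDegree_X, ih2d]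
      omega
    have h2 : (X * Pu γ (n+1)).degree = ((n+2 : ℕ) : WithBot ℕ) := by
      rw [degree_eq_natDegree hm.ne_zero, hd]
    have h1 : (C γ * Pu γ n).degree ≤ ((n : ℕ) : WithBot ℕ) := by
      refine le_trans degree_le_natDegree ?_
      exact_mod_cast (natDegree_C_mul_le γ (Pu γ n)).trans_eq ih1d
    have hsmall : (C γ * Pu γ n).degree < (X * Pu γ (n+1)).degree := by
      rw [h2]
      refine lt_of_le_of_lt h1 ?_
      exact_mod_cast Nat.lt_add_of_pos_right (by norm_num)
    constructor
    · exact hm.sub_of_left hsmall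
    · rw [← hd]
      apply natDegree_sub_eq_left_of_natDegree_lt
      rw [hd]
      have := natDegree_C_mul_le γ (Pu γ n)
      omega

noncomputable def cangle (n j : ℕ) : ℝ := (j+1) * π / (n+1)
noncomputable def cc (n j : ℕ) : ℂ := (Real.cos (cangle n j) : ℂ)

lemma cangle_pos (n j : ℕ) : 0 < cangle n j := by
  unfold cangle
  positivity

lemma cangle_lt_pi {n j : ℕ} (h : j < n) : cangle n j < π := by
  unfold cangle
  rw [div_lt_iff₀ (by positivity)]
  have h1 : ((j:ℝ)+1) < ((n:ℝ)+1) := by exact_mod_cast Nat.succ_lt_succ h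
  nlinarith [Real.pi_pos]

lemma cangle_inj {n j j' : ℕ} (hj : j < n) (hj' : j' < n) (h : cangle n j = cangle n j') :
    j = j' := by
  unfold cangle at h
  have hπ := Real.pi_ne_zero
  have hne : ((n:ℝ)+1) ≠ 0 := by positivity
  rw [div_eq_div_iff hne hne] at h
  have h2 := mul_right_cancel₀ hne h
  have h3 := mul_right_cancel₀ hπ h2
  have : (j:ℝ) = j' := by linarith
  exact_mod_cast this

lemma sin_cangle_pos {n j : ℕ} (h : j < n) : 0 < Real.sin (cangle n j) :=
  Real.sin_pos_of_pos_of_lt_pi (cangle_pos n j) (cangle_lt_pi h)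

lemma sin_top_cangle {n j : ℕ} : Real.sin ((n+1) * cangle n j) = 0 := by
  unfold cangle
  have h1 : ((n:ℝ)+1) * ((j+1) * π / (n+1)) = (j+1) * π := by
    field_simp
  rw [h1]
  exact_mod_cast Real.sin_nat_mul_pi (j+1)

lemma Pu_eval_root (δ : ℂ) (n : ℕ) {j : ℕ} (hj : j < n) :
    eval (2*δ*cc n j) (Pu (δ^2) n) = 0 := by
  have hs := sinid δ ((cangle n j : ℝ) : ℂ) n
  have hcos : Complex.cos ((cangle n j : ℝ) : ℂ) = cc n j := by
    rw [← Complex.ofReal_cos]; rfl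
  have hsin0 : Complex.sin (((n:ℂ)+1) * ((cangle n j : ℝ) : ℂ)) = 0 := by
    have : ((n:ℂ)+1) * ((cangle n j : ℝ) : ℂ) = (((n+1) * cangle n j : ℝ) : ℂ) := by
      push_cast; ring
    rw [this, ← Complex.ofReal_sin, sin_top_cangle]
    simp
  have hsinne : Complex.sin ((cangle n j : ℝ) : ℂ) ≠ 0 := by
    rw [← Complex.ofReal_sin]
    exact_mod_cast (sin_cangle_pos hj).ne'
  rw [hcos, hsin0, mul_zero] at hs
  exact (mul_eq_zero.mp hs).resolve_right hsinne

lemma Pu_factor (δ : ℂ) (hδ : δ ≠ 0) (n : ℕ) :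
    Pu (δ^2) n = ∏ j ∈ Finset.range n, (X - C (2*δ*cc n j)) := by
  set R := ∏ j ∈ Finset.range n, (X - C (2*δ*cc n j)) with hR
  have hRm : R.Monic := monic_prod_of_monic _ _ (fun j _ => monic_X_sub_C _)
  have hRd : R.natDegree = n := by
    rw [hR, natDegree_prod_of_monic _ _ (fun j _ => monic_X_sub_C _)]
    simp only [natDegree_X_sub_C, Finset.sum_const, Finset.card_range, smul_eq_mul, mul_one]
  obtain ⟨hPm, hPd⟩ := Pu_monic (δ^2) n
  by_cases hD : Pu (δ^2) n - R = 0
  · exact sub_eq_zero.mp hD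
  exfalso
  apply hD
  have hinj : Set.InjOn (fun j => 2*δ*cc n j) (Finset.range n : Set ℕ) := by
    intro j hj j' hj' h
    simp only [Finset.coe_range, Set.mem_Iio] at hj hj'
    have h2 : cc n j = cc n j' := by
      have h4 : (2:ℂ)*δ ≠ 0 := by simp [hδ]
      exact mul_left_cancel₀ h4 (by simpa [mul_assoc] using h)
    have h3 : Real.cos (cangle n j) = Real.cos (cangle n j') := by
      unfold cc at h2
      exact_mod_cast h2
    apply cangle_inj hj hj'
    apply Real.injOn_cos _ _ h3
    · exact ⟨(cangle_pos n j).le, (cangle_lt_pi hj).le⟩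
    · exact ⟨(cangle_pos n j').le, (cangle_lt_pi hj').le⟩
  apply eq_zero_of_natDegree_lt_card_of_eval_eq_zero'
      (Pu (δ^2) n - R) ((Finset.range n).image (fun j => 2*δ*cc n j))
  · intro x hx
    simp only [Finset.mem_image, Finset.mem_range] at hx
    obtain ⟨j, hj, rfl⟩ := hx
    rw [eval_sub, Pu_eval_root δ n hj, hR, eval_prod]
    rw [Finset.prod_eq_zero (Finset.mem_range.mpr hj) (by simp)]
    ring
  · rw [Finset.card_image_of_injOn hinj, Finset.card_range]
    have hdeg : (Pu (δ^2) n - R).degree < (Pu (δ^2) n).degree :=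
      degree_sub_lt (by rw [degree_eq_natDegree hPm.ne_zero, degree_eq_natDegree hRm.ne_zero, hPd, hRd])
        hPm.ne_zero (by rw [hPm.leadingCoeff, hRm.leadingCoeff])
    have := natDegree_lt_natDegree hD hdeg
    omega

lemma cc_reflect {n j : ℕ} (h : j < n) : cc n (n-1-j) = -cc n j := by
  unfold cc
  have harg : cangle n (n-1-j) = π - cangle n j := by
    unfold cangle
    have h1 : ((n-1-j : ℕ) : ℝ) = (n : ℝ) - 1 - j := by
      have e : n - 1 - j = n - (1+j) := by omega
      rw [e, Nat.cast_sub (by omega : 1 + j ≤ n)]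
      push_cast
      ring
    rw [h1, eq_sub_iff_add_eq]
    field_simp
    ring
  rw [harg, Real.cos_pi_sub]
  simp

lemma cheb_gamma_zero (β : ℂ) : ∀ n, cheb β 0 n = β ^ n := by
  apply two_step
  · simp [cheb]
  · simp [cheb]
  · intro n ih1 ih2
    show β * cheb β 0 (n+1) - 0 * cheb β 0 n = β ^ (n+2)
    rw [ih2]; ring

lemma cc_mid (m : ℕ) : cc (2*m+1) m = 0 := by
  unfold cc cangle
  have h : ((m:ℝ)+1) * π / ((2*m+1:ℕ) + 1) = π / 2 := by
    push_cast
    rw [div_eq_div_iff (by positivity) (by norm_num)]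
    ring
  rw [h, Real.cos_pi_div_two]
  simp

lemma pair_prod (β δ : ℂ) (n : ℕ) :
    ∏ j ∈ Finset.range n, (β - 2*δ*cc n j)
      = β^(n % 2) * ∏ j ∈ Finset.range (n/2), (β^2 - 4*δ^2*(cc n j)^2) := by
  have refl_prod : ∀ m k : ℕ, m ≤ k → k ≤ n → (∀ j, m ≤ j → j < k → n - 1 - j ∈ Finset.Ico (n - k) (n - m)) →
      True := fun _ _ _ _ _ => trivial
  rcases Nat.even_or_odd n with ⟨m, hm⟩ | ⟨m, hm⟩
  · -- n = 2m
    have hn : n = 2*m := by omega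
    subst hn
    have h2 : 2*m/2 = m := by omega
    have h1 : 2*m % 2 = 0 := by omega
    rw [h2, h1, pow_zero, one_mul]
    rw [Finset.range_eq_Ico, ← Finset.prod_Ico_consecutive _ (Nat.zero_le m) (by omega : m ≤ 2*m)]
    have hrefl : ∏ j ∈ Finset.Ico m (2*m), (β - 2*δ*cc (2*m) j)
        = ∏ j ∈ Finset.Ico 0 m, (β - 2*δ*cc (2*m) (2*m - 1 - j)) := by
      apply Finset.prod_nbij' (i := fun j => 2*m - 1 - j) (j := fun j => 2*m - 1 - j)
      · intro a ha; rw [Finset.mem_Ico] at ha ⊢; omega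
      · intro a ha; rw [Finset.mem_Ico] at ha ⊢; omega
      · intro a ha; rw [Finset.mem_Ico] at ha; omega
      · intro a ha; rw [Finset.mem_Ico] at ha; omega
      · intro a ha; rw [Finset.mem_Ico] at ha
        rw [show 2*m - 1 - (2*m - 1 - a) = a from by omega]
    rw [hrefl, ← Finset.prod_mul_distrib]
    rw [Finset.range_eq_Ico]
    apply Finset.prod_congr rfl
    intro j hj
    rw [Finset.mem_Ico] at hj
    rw [cc_reflect (by omega : j < 2*m)]
    ring
  · -- n = 2m+1
    have hn : n = 2*m+1 := by omega
    subst hn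
    have h2 : (2*m+1)/2 = m := by omega
    have h1 : (2*m+1) % 2 = 1 := by omega
    rw [h2, h1, pow_one]
    rw [Finset.range_eq_Ico, ← Finset.prod_Ico_consecutive _ (Nat.zero_le m) (by omega : m ≤ 2*m+1)]
    rw [Finset.prod_eq_prod_Ico_succ_bot (by omega : m < 2*m+1)]
    rw [cc_mid, mul_zero, sub_zero]
    have hrefl : ∏ j ∈ Finset.Ico (m+1) (2*m+1), (β - 2*δ*cc (2*m+1) j)
        = ∏ j ∈ Finset.Ico 0 m, (β - 2*δ*cc (2*m+1) (2*m+1 - 1 - j)) := by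
      apply Finset.prod_nbij' (i := fun j => 2*m+1 - 1 - j) (j := fun j => 2*m+1 - 1 - j)
      · intro a ha; rw [Finset.mem_Ico] at ha ⊢; omega
      · intro a ha; rw [Finset.mem_Ico] at ha ⊢; omega
      · intro a ha; rw [Finset.mem_Ico] at ha; omega
      · intro a ha; rw [Finset.mem_Ico] at ha; omega
      · intro a ha; rw [Finset.mem_Ico] at ha
        rw [show 2*m+1 - 1 - (2*m+1 - 1 - a) = a from by omega]
    rw [hrefl]
    rw [show ∀ (A B C : ℂ), A * (B * C) = B * (A * C) from fun A B C => by ring]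
    congr 1
    rw [← Finset.prod_mul_distrib]
    rw [Finset.range_eq_Ico]
    apply Finset.prod_congr rfl
    intro j hj
    rw [Finset.mem_Ico] at hj
    rw [cc_reflect (by omega : j < 2*m+1)]
    ring

lemma cheb_closed (β δ : ℂ) (n : ℕ) :
    cheb β (δ^2) n = β^(n % 2) * ∏ j ∈ Finset.range (n/2), (β^2 - 4*δ^2*(cc n j)^2) := by
  by_cases hδ : δ = 0
  · subst hδ
    rw [show ((0:ℂ)^2) = 0 by ring, cheb_gamma_zero]
    have : ∏ j ∈ Finset.range (n/2), (β^2 - 4*(0:ℂ)*(cc n j)^2) = (β^2)^(n/2) := by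
      rw [Finset.prod_congr rfl (fun j _ => by ring : ∀ j ∈ Finset.range (n/2), β^2 - 4*(0:ℂ)*(cc n j)^2 = β^2)]
      rw [Finset.prod_const, Finset.card_range]
    rw [this, ← pow_mul, ← pow_add]
    congr 1
    omega
  · rw [← eval_Pu (δ^2) n β, Pu_factor δ hδ n, eval_prod]
    have : ∀ j ∈ Finset.range n, eval β (X - C (2*δ*cc n j)) = β - 2*δ*cc n j := by
      intro j _; simp
    rw [Finset.prod_congr rfl this]
    exact pair_prod β δ n

noncomputable def chebR (β γ : ℝ) : ℕ → ℝ
  | 0 => 1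
  | 1 => β
  | (n+2) => β * chebR β γ (n+1) - γ * chebR β γ n

lemma chebR_cast (β γ : ℝ) : ∀ n, ((chebR β γ n : ℝ) : ℂ) = cheb (β:ℂ) (γ:ℂ) n := by
  apply two_step
  · simp [chebR, cheb]
  · simp [chebR, cheb]
  · intro n ih1 ih2
    show ((β * chebR β γ (n+1) - γ * chebR β γ n : ℝ) : ℂ) = (β:ℂ) * cheb β γ (n+1) - (γ:ℂ) * cheb β γ n
    push_cast [ih1, ih2]
    ring

lemma chebR_closed (β γ : ℝ) (n : ℕ) :
    chebR β γ n = β^(n % 2) * ∏ j ∈ Finset.range (n/2), (β^2 - 4 * Real.cos (cangle n j)^2 * γ) := by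
  obtain ⟨δ, hδ⟩ : ∃ δ : ℂ, δ^2 = (γ : ℂ) := by
    rcases le_or_gt 0 γ with h | h
    · exact ⟨((Real.sqrt γ : ℝ) : ℂ), by rw [← Complex.ofReal_pow, Real.sq_sqrt h]⟩
    · refine ⟨Complex.I * ((Real.sqrt (-γ) : ℝ) : ℂ), ?_⟩
      rw [mul_pow, Complex.I_sq, ← Complex.ofReal_pow, Real.sq_sqrt (by linarith)]
      push_cast
      ring
  apply Complex.ofReal_injective
  rw [chebR_cast β γ n, ← hδ, cheb_closed]
  rw [hδ]
  push_cast
  congr 1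
  apply Finset.prod_congr rfl
  intro j _
  unfold cc
  rw [Complex.ofReal_cos]
  ring

open MvPolynomial in
noncomputable def Mc : ℕ → MvPolynomial (Fin 2) ℝ
  | 0 => 1
  | 1 => MvPolynomial.X 0
  | (n+2) => MvPolynomial.X 0 * Mc (n+1) - MvPolynomial.X 1 * Mc n

lemma Mc_eval (x : Fin 2 → ℝ) : ∀ n, MvPolynomial.eval x (Mc n) = chebR (x 0) (x 1) n := by
  apply two_step
  · simp [Mc, chebR]
  · simp [Mc, chebR]
  · intro n ih1 ih2
    show MvPolynomial.eval x (MvPolynomial.X 0 * Mc (n+1) - MvPolynomial.X 1 * Mc n)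
        = x 0 * chebR (x 0) (x 1) (n+1) - x 1 * chebR (x 0) (x 1) n
    simp [ih1, ih2]

lemma Mc_eq (n : ℕ) : Mc n = (MvPolynomial.X 0)^(n % 2) *
    ∏ j ∈ Finset.range (n/2),
      ((MvPolynomial.X 0)^2 - MvPolynomial.C (4 * Real.cos (cangle n j)^2) * MvPolynomial.X 1) := by
  apply MvPolynomial.funext
  intro x
  rw [Mc_eval x n, chebR_closed (x 0) (x 1) n]
  rw [map_mul, map_pow, MvPolynomial.eval_X, map_prod]
  congr 1
  apply Finset.prod_congr rfl
  intro j _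
  rw [map_sub, map_pow, MvPolynomial.eval_X, map_mul, MvPolynomial.eval_C, MvPolynomial.eval_X]

lemma Mc_aeval (b c : Polynomial ℝ) (P : ℕ → Polynomial ℝ) (h0 : P 0 = 1) (h1 : P 1 = b)
    (hrec : ∀ n, P (n+2) = b * P (n+1) - c * P n) :
    ∀ n, MvPolynomial.aeval ![b, c] (Mc n) = P n := by
  apply two_step
  · rw [h0]
    simp [Mc]
  · rw [h1]
    show MvPolynomial.aeval ![b, c] (MvPolynomial.X 0) = b
    simp
  · intro n ih1 ih2
    show MvPolynomial.aeval ![b, c] (MvPolynomial.X 0 * Mc (n+1) - MvPolynomial.X 1 * Mc n)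
        = P (n+2)
    rw [map_sub, map_mul, map_mul, MvPolynomial.aeval_X, MvPolynomial.aeval_X, ih1, ih2, hrec n]
    simp

lemma P_closed (b c : Polynomial ℝ) (P : ℕ → Polynomial ℝ) (h0 : P 0 = 1) (h1 : P 1 = b)
    (hrec : ∀ n, P (n+2) = b * P (n+1) - c * P n) (n : ℕ) :
    P n = b^(n % 2) * ∏ j ∈ Finset.range (n/2),
      (b^2 - Polynomial.C (4 * Real.cos (cangle n j)^2) * c) := by
  rw [← Mc_aeval b c P h0 h1 hrec n, Mc_eq n]
  rw [map_mul, map_pow, MvPolynomial.aeval_X, map_prod]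
  rw [show (![b, c] 0) = b from rfl]
  congr 1
  apply Finset.prod_congr rfl
  intro j _
  rw [map_sub, map_pow, MvPolynomial.aeval_X, map_mul, MvPolynomial.aeval_C, MvPolynomial.aeval_X]
  rw [show (![b, c] 0) = b from rfl, show (![b, c] 1) = c from rfl]
  rw [Polynomial.algebraMap_eq]


lemma coeff_indepPoly {V : Type*} [Fintype V] (G : SimpleGraph V) (t : ℕ) :
    (indepPoly G).coeff t = (indepCount G t : ℝ) := by
  rw [indepPoly, Polynomial.finset_sum_coeff, indepCount]
  have h1 : ∀ s ∈ (Finset.univ : Finset (Finset V)).filter (fun s => IsIndepFinset G s),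
      ((X : Polynomial ℝ)^s.card).coeff t = if t = s.card then (1:ℝ) else 0 := by
    intro s _
    rw [Polynomial.coeff_X_pow]
  rw [Finset.sum_congr rfl h1, Finset.sum_boole]
  congr 1
  have h2 : ((Finset.univ : Finset (Finset V)).filter (fun s => IsIndepFinset G s)).filter
      (fun s => t = s.card) = Finset.univ.filter (fun s => IsIndepFinset G s ∧ s.card = t) := by
    ext s
    simp only [Finset.mem_filter, Finset.mem_univ, true_and]
    constructor
    · rintro ⟨hi, he⟩
      exact ⟨hi, he.symm⟩
    · rintro ⟨hi, he⟩
      exact ⟨hi, he.symm⟩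
  rw [h2]

end Aux

section Combinatorics
variable {V : Type*} [Fintype V] (G : SimpleGraph V) (v w : V)

/-- vertex-deletion sum lemma -/
lemma sum_indep_mem (u : V) :
    ∑ T ∈ Finset.univ.filter (fun T => IsIndepFinset G T ∧ u ∈ T), (X : Polynomial ℝ)^T.card
      = X * indepPoly (delNbhd G u) := by
  set pu : V → Prop := fun x => ¬ (x = u ∨ G.Adj u x) with hpu
  rw [indepPoly, Finset.mul_sum]
  apply Finset.sum_nbij' (i := fun T => (T.erase u).subtype pu)
      (j := fun T' => insert u (T'.map (Function.Embedding.subtype pu)))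
  · -- membership forward
    intro T hT
    simp only [Finset.mem_filter, Finset.mem_univ, true_and] at hT ⊢
    intro a ha b hb hadj
    rw [Finset.mem_subtype] at ha hb
    exact hT.1 _ (Finset.mem_of_mem_erase ha) _ (Finset.mem_of_mem_erase hb) hadj
  · -- membership backward
    intro T' hT'
    simp only [Finset.mem_filter, Finset.mem_univ, true_and] at hT' ⊢
    constructor
    · intro a ha b hb hadj
      rw [Finset.mem_insert] at ha hb
      have hne : ∀ x : {x : V // pu x}, x.val ∈ T'.map (Function.Embedding.subtype pu) → ¬ G.Adj u x.val := by
        intro x _ h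
        exact x.2 (Or.inr h)
      rcases ha with ha | ha <;> rcases hb with hb | hb
      · rw [ha, hb] at hadj
        exact (G.loopless.irrefl u) hadj
      · rw [ha] at hadj
        obtain ⟨y, hy, rfl⟩ := Finset.mem_map.mp hb
        exact y.2 (Or.inr hadj)
      · rw [hb] at hadj
        obtain ⟨y, hy, rfl⟩ := Finset.mem_map.mp ha
        exact y.2 (Or.inr hadj.symm)
      · obtain ⟨y, hy, rfl⟩ := Finset.mem_map.mp ha
        obtain ⟨z, hz, rfl⟩ := Finset.mem_map.mp hb
        exact hT' _ hy _ hz hadj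
    · exact Finset.mem_insert_self u _
  · -- left inverse
    intro T hT
    simp only [Finset.mem_filter, Finset.mem_univ, true_and] at hT
    rw [Finset.subtype_map]
    have : (T.erase u).filter pu = T.erase u := by
      apply Finset.filter_true_of_mem
      intro x hx
      rw [Finset.mem_erase] at hx
      rw [hpu]
      push_neg
      exact ⟨hx.1, fun h => hT.1 _ hT.2 _ hx.2 h⟩
    rw [this, Finset.insert_erase hT.2]
  · -- right inverse
    intro T' hT'
    ext a
    rw [Finset.mem_subtype, Finset.mem_erase]
    have hau : a.val ≠ u := by
      intro h
      exact a.2 (Or.inl h)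
    simp only [Finset.mem_insert, hau, false_or, ne_eq, not_false_eq_true, true_and]
    constructor
    · intro h
      obtain ⟨y, hy, he⟩ := Finset.mem_map.mp h
      have : y = a := Subtype.ext he
      subst this
      exact hy
    · intro h
      exact Finset.mem_map.mpr ⟨a, h, rfl⟩
  · -- values
    intro T hT
    simp only [Finset.mem_filter, Finset.mem_univ, true_and] at hT
    rw [Finset.card_subtype]
    have : (T.erase u).filter pu = T.erase u := by
      apply Finset.filter_true_of_mem
      intro x hx
      rw [Finset.mem_erase] at hx
      rw [hpu]
      push_neg
      exact ⟨hx.1, fun h => hT.1 _ hT.2 _ hx.2 h⟩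
    rw [this, Finset.card_erase_of_mem hT.2]
    have hc := Finset.card_pos.mpr ⟨u, hT.2⟩
    conv_lhs => rw [show T.card = (T.card - 1) + 1 from by omega]
    rw [pow_succ]
    ring

end Combinatorics

section Split
variable {V : Type*} [Fintype V] (G : SimpleGraph V) (v w : V) {n : ℕ}

def upv {V : Type*} {n : ℕ} (q : V × Fin n) : V × Fin (n+1) := (q.1, q.2.castSucc)
def topv {V : Type*} {n : ℕ} (a : V) : V × Fin (n+1) := (a, Fin.last n)

def TW {V : Type*} (w : V) (n : ℕ) (S : Finset (V × Fin n)) : Prop :=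
  ∃ i : Fin n, (i : ℕ) + 1 = n ∧ (w, i) ∈ S

lemma concat_adj (n : ℕ) (p q : V × Fin n) :
    (concat G v w n).Adj p q ↔ p ≠ q ∧
      ((p.2 = q.2 ∧ G.Adj p.1 q.1) ∨ (p.1 = w ∧ q.1 = v ∧ (p.2 : ℕ) + 1 = (q.2 : ℕ))
        ∨ (q.1 = w ∧ p.1 = v ∧ (q.2 : ℕ) + 1 = (p.2 : ℕ))) := by
  rw [concat, SimpleGraph.fromRel_adj]
  apply and_congr_right
  intro _
  constructor
  · rintro ((⟨h1, h2⟩ | h) | (⟨h1, h2⟩ | h))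
    · exact Or.inl ⟨h1, h2⟩
    · exact Or.inr (Or.inl h)
    · exact Or.inl ⟨h1.symm, h2.symm⟩
    · exact Or.inr (Or.inr h)
  · rintro (h | h | h)
    · exact Or.inl (Or.inl h)
    · exact Or.inl (Or.inr h)
    · exact Or.inr (Or.inr h)

lemma upv_injective : Function.Injective (upv : V × Fin n → V × Fin (n+1)) := by
  rintro ⟨a, i⟩ ⟨b, j⟩ h
  simp only [upv, Prod.mk.injEq] at h
  exact Prod.ext h.1 (Fin.castSucc_injective n h.2)

lemma topv_injective : Function.Injective (topv : V → V × Fin (n+1)) := by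
  intro a b h
  simpa only [topv, Prod.mk.injEq, and_true] using h

lemma upv_ne_topv (q : V × Fin n) (a : V) : upv q ≠ topv a := by
  intro h
  have h2 : (q.2.castSucc : Fin (n+1)) = Fin.last n := (Prod.ext_iff.mp h).2
  have := Fin.castSucc_lt_last q.2
  exact absurd h2 this.ne

lemma adj_upv_upv (q1 q2 : V × Fin n) :
    (concat G v w (n+1)).Adj (upv q1) (upv q2) ↔ (concat G v w n).Adj q1 q2 := by
  rw [concat_adj, concat_adj]
  apply and_congr
  · constructor
    · intro h hq; exact h (congrArg upv hq)
    · intro h hq; exact h (upv_injective hq)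
  · simp only [upv, Fin.coe_castSucc]
    apply or_congr
    · apply and_congr_left
      intro _
      exact ⟨fun h => Fin.castSucc_injective n h, fun h => congrArg Fin.castSucc h⟩
    · exact Iff.rfl

lemma adj_upv_topv (q : V × Fin n) (a : V) :
    (concat G v w (n+1)).Adj (upv q) (topv a) ↔ (q.1 = w ∧ a = v ∧ (q.2 : ℕ) + 1 = n) := by
  rw [concat_adj]
  simp only [upv, topv, Fin.coe_castSucc, Fin.val_last]
  constructor
  · rintro ⟨hne, (⟨h1, _⟩ | h | ⟨_, _, h3⟩)⟩
    · exfalso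
      have := Fin.castSucc_lt_last q.2
      exact absurd h1 this.ne
    · exact h
    · exfalso
      have := q.2.isLt
      omega
  · intro h
    exact ⟨upv_ne_topv q a, Or.inr (Or.inl h)⟩

lemma adj_topv_topv (a b : V) :
    (concat G v w (n+1)).Adj (topv a) (topv b) ↔ G.Adj a b := by
  rw [concat_adj]
  constructor
  · rintro ⟨hne, (⟨_, h2⟩ | ⟨_, _, h3⟩ | ⟨_, _, h3⟩)⟩
    · exact h2
    · simp only [topv, Fin.val_last] at h3
      omega
    · simp only [topv, Fin.val_last] at h3
      omega
  · intro h
    exact ⟨fun he => G.ne_of_adj h (topv_injective he), Or.inl ⟨rfl, h⟩⟩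

noncomputable def downF {V : Type*} [Fintype V] {n : ℕ} (S : Finset (V × Fin (n+1))) :
    Finset (V × Fin n) :=
  Finset.univ.filter (fun q => upv q ∈ S)

noncomputable def topF {V : Type*} [Fintype V] {n : ℕ} (S : Finset (V × Fin (n+1))) :
    Finset V :=
  Finset.univ.filter (fun a => topv a ∈ S)

noncomputable def phiF {V : Type*} [Fintype V] {n : ℕ} (S₀ : Finset (V × Fin n))
    (T : Finset V) : Finset (V × Fin (n+1)) :=
  S₀.image upv ∪ T.image topv

lemma mem_phiF_upv (S₀ : Finset (V × Fin n)) (T : Finset V) (q : V × Fin n) :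
    upv q ∈ phiF S₀ T ↔ q ∈ S₀ := by
  simp only [phiF, Finset.mem_union, Finset.mem_image]
  constructor
  · rintro (⟨x, hx, he⟩ | ⟨a, ha, he⟩)
    · rwa [← upv_injective he]
    · exact absurd he.symm (upv_ne_topv q a)
  · intro h
    exact Or.inl ⟨q, h, rfl⟩

lemma mem_phiF_topv (S₀ : Finset (V × Fin n)) (T : Finset V) (a : V) :
    topv a ∈ phiF S₀ T ↔ a ∈ T := by
  simp only [phiF, Finset.mem_union, Finset.mem_image]
  constructor
  · rintro (⟨x, hx, he⟩ | ⟨b, hb, he⟩)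
    · exact absurd he (upv_ne_topv x a)
    · rwa [← topv_injective he]
  · intro h
    exact Or.inr ⟨a, h, rfl⟩

lemma downF_phiF (S₀ : Finset (V × Fin n)) (T : Finset V) : downF (phiF S₀ T) = S₀ := by
  ext q
  rw [downF, Finset.mem_filter]
  simp [mem_phiF_upv]

lemma topF_phiF (S₀ : Finset (V × Fin n)) (T : Finset V) : topF (phiF S₀ T) = T := by
  ext a
  rw [topF, Finset.mem_filter]
  simp [mem_phiF_topv]

lemma phiF_down_top (S : Finset (V × Fin (n+1))) : phiF (downF S) (topF S) = S := by
  ext x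
  obtain ⟨a, i⟩ := x
  rcases Fin.eq_castSucc_or_eq_last i with ⟨j, rfl⟩ | rfl
  · rw [show ((a, j.castSucc) : V × Fin (n+1)) = upv (a, j) from rfl, mem_phiF_upv]
    rw [downF, Finset.mem_filter]
    simp [upv]
  · rw [show ((a, Fin.last n) : V × Fin (n+1)) = topv a from rfl, mem_phiF_topv]
    rw [topF, Finset.mem_filter]
    simp [topv]

lemma card_phiF (S₀ : Finset (V × Fin n)) (T : Finset V) :
    (phiF S₀ T).card = S₀.card + T.card := by
  rw [phiF, Finset.card_union_of_disjoint, Finset.card_image_of_injective _ upv_injective,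
    Finset.card_image_of_injective _ topv_injective]
  rw [Finset.disjoint_left]
  rintro x hx hx'
  obtain ⟨q, _, rfl⟩ := Finset.mem_image.mp hx
  obtain ⟨a, _, he⟩ := Finset.mem_image.mp hx'
  exact upv_ne_topv q a he.symm

lemma tw_phiF (S₀ : Finset (V × Fin n)) (T : Finset V) :
    TW w (n+1) (phiF S₀ T) ↔ w ∈ T := by
  constructor
  · rintro ⟨i, hi, hmem⟩
    have : i = Fin.last n := by
      apply Fin.ext
      rw [Fin.val_last]
      omega
    subst this
    rwa [show ((w, Fin.last n) : V × Fin (n+1)) = topv w from rfl, mem_phiF_topv] at hmem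
  · intro h
    refine ⟨Fin.last n, by rw [Fin.val_last], ?_⟩
    rw [show ((w, Fin.last n) : V × Fin (n+1)) = topv w from rfl, mem_phiF_topv]
    exact h

lemma indep_phiF (S₀ : Finset (V × Fin n)) (T : Finset V) :
    IsIndepFinset (concat G v w (n+1)) (phiF S₀ T) ↔
      IsIndepFinset (concat G v w n) S₀ ∧ IsIndepFinset G T ∧ ¬ (TW w n S₀ ∧ v ∈ T) := by
  constructor
  · intro H
    refine ⟨?_, ?_, ?_⟩
    · intro q1 h1 q2 h2 hadj
      exact H (upv q1) ((mem_phiF_upv S₀ T q1).mpr h1) (upv q2) ((mem_phiF_upv S₀ T q2).mpr h2)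
        ((adj_upv_upv G v w q1 q2).mpr hadj)
    · intro a ha b hb hadj
      exact H (topv a) ((mem_phiF_topv S₀ T a).mpr ha) (topv b) ((mem_phiF_topv S₀ T b).mpr hb)
        ((adj_topv_topv G v w a b).mpr hadj)
    · rintro ⟨⟨i, hi, hwi⟩, hv⟩
      apply H (upv (w, i)) ((mem_phiF_upv S₀ T _).mpr hwi) (topv v) ((mem_phiF_topv S₀ T v).mpr hv)
      rw [adj_upv_topv]
      exact ⟨rfl, rfl, hi⟩
  · rintro ⟨h1, h2, h3⟩ x hx y hy hadj
    simp only [phiF, Finset.mem_union, Finset.mem_image] at hx hy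
    rcases hx with ⟨q1, hq1, rfl⟩ | ⟨a, ha, rfl⟩ <;> rcases hy with ⟨q2, hq2, rfl⟩ | ⟨b, hb, rfl⟩
    · exact h1 q1 hq1 q2 hq2 ((adj_upv_upv G v w q1 q2).mp hadj)
    · obtain ⟨hw', hv', hn'⟩ := (adj_upv_topv G v w q1 b).mp hadj
      apply h3
      refine ⟨⟨q1.2, hn', ?_⟩, ?_⟩
      · rw [← hw']
        exact hq1
      · rw [← hv']
        exact hb
    · obtain ⟨hw', hv', hn'⟩ := (adj_upv_topv G v w q2 a).mp hadj.symm
      apply h3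
      refine ⟨⟨q2.2, hn', ?_⟩, ?_⟩
      · rw [← hw']
        exact hq2
      · rw [← hv']
        exact ha
    · exact h2 a ha b hb ((adj_topv_topv G v w a b).mp hadj)

/-- master splitting lemma -/
lemma sum_split (ρ : Finset V → Prop) :
    ∑ S ∈ Finset.univ.filter
        (fun S => IsIndepFinset (concat G v w (n+1)) S ∧ ρ (topF S)), (X : Polynomial ℝ)^S.card
      = ∑ ST ∈ (Finset.univ ×ˢ Finset.univ).filter
          (fun ST : Finset (V × Fin n) × Finset V =>
            IsIndepFinset (concat G v w n) ST.1 ∧ IsIndepFinset G ST.2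
              ∧ ¬ (TW w n ST.1 ∧ v ∈ ST.2) ∧ ρ ST.2),
          (X : Polynomial ℝ)^(ST.1.card + ST.2.card) := by
  apply Finset.sum_nbij' (i := fun S => (downF S, topF S)) (j := fun ST => phiF ST.1 ST.2)
  · intro S hS
    rw [Finset.mem_filter] at hS
    rw [Finset.mem_filter]
    refine ⟨Finset.mem_product.mpr ⟨Finset.mem_univ _, Finset.mem_univ _⟩, ?_⟩
    have h := (indep_phiF G v w (downF S) (topF S)).mp (by rw [phiF_down_top]; exact hS.2.1)
    exact ⟨h.1, h.2.1, h.2.2, hS.2.2⟩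
  · intro ST hST
    rw [Finset.mem_filter] at hST
    obtain ⟨_, h1, h2, h3, h4⟩ := hST
    rw [Finset.mem_filter]
    refine ⟨Finset.mem_univ _, ?_, ?_⟩
    · rw [indep_phiF]
      exact ⟨h1, h2, h3⟩
    · rwa [topF_phiF]
  · intro S _
    exact phiF_down_top S
  · intro ST _
    rw [downF_phiF, topF_phiF]
  · intro S _
    rw [← card_phiF (downF S) (topF S), phiF_down_top]

end Split

section Rec
variable {V : Type*} [Fintype V] (G : SimpleGraph V) (v w : V)

noncomputable def Pp (n : ℕ) : Polynomial ℝ := indepPoly (concat G v w n)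

noncomputable def Wt (n : ℕ) : Polynomial ℝ :=
  ∑ S ∈ Finset.univ.filter (fun S => IsIndepFinset (concat G v w n) S ∧ TW w n S),
    (X : Polynomial ℝ)^S.card

lemma filter_congr' {α : Type*} (s : Finset α) (p q : α → Prop)
    {ip : DecidablePred p} {iq : DecidablePred q} (h : ∀ x, p x ↔ q x) :
    @Finset.filter α p ip s = @Finset.filter α q iq s := by
  ext x
  rw [Finset.mem_filter, Finset.mem_filter, h x]

lemma sum_congr_pred {α : Type*} {M : Type*} [AddCommMonoid M] (s : Finset α)
    (p q : α → Prop) {ip : DecidablePred p} {iq : DecidablePred q}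
    (h : ∀ x, p x ↔ q x) (f : α → M) :
    ∑ x ∈ @Finset.filter α p ip s, f x = ∑ x ∈ @Finset.filter α q iq s, f x := by
  apply Finset.sum_congr _ (fun _ _ => rfl)
  have : ∀ x ∈ s, p x ↔ q x := fun x _ => h x
  exact Finset.filter_congr this

lemma prod_sum_helper {n : ℕ} (sa : Finset (Finset (V × Fin n))) (sb : Finset (Finset V)) :
    ∑ ST ∈ sa ×ˢ sb, (X : Polynomial ℝ)^(ST.1.card + ST.2.card)
      = (∑ S ∈ sa, (X : Polynomial ℝ)^S.card) * (∑ T ∈ sb, (X : Polynomial ℝ)^T.card) := by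
  rw [Finset.sum_product, Finset.sum_mul_sum]
  apply Finset.sum_congr rfl
  intro S _
  apply Finset.sum_congr rfl
  intro T _
  rw [pow_add]

lemma Pp_zero : Pp G v w 0 = 1 := by
  rw [Pp, indepPoly]
  have h1 : (Finset.univ : Finset (Finset (V × Fin 0))) = {∅} := by
    apply Finset.eq_singleton_iff_unique_mem.mpr
    refine ⟨Finset.mem_univ _, fun s _ => ?_⟩
    apply Finset.eq_empty_of_forall_notMem
    intro x _
    exact Fin.elim0 x.2
  have h2 : IsIndepFinset (concat G v w 0) (∅ : Finset (V × Fin 0)) := by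
    intro a ha
    exact absurd ha (Finset.notMem_empty a)
  rw [h1, Finset.filter_singleton, if_pos h2]
  simp

lemma Wt_zero : Wt G v w 0 = 0 := by
  rw [Wt]
  rw [Finset.filter_false_of_mem]
  · simp
  · rintro S _ ⟨_, ⟨i, _, _⟩⟩
    exact Fin.elim0 i

lemma tw_iff_topF {n : ℕ} (S : Finset (V × Fin (n+1))) :
    TW w (n+1) S ↔ w ∈ topF S := by
  rw [topF, Finset.mem_filter]
  constructor
  · rintro ⟨i, hi, hm⟩
    have : i = Fin.last n := by
      apply Fin.ext
      rw [Fin.val_last]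
      omega
    subst this
    exact ⟨Finset.mem_univ _, hm⟩
  · rintro ⟨_, hm⟩
    exact ⟨Fin.last n, by rw [Fin.val_last], hm⟩

lemma Pp_succ (n : ℕ) :
    Pp G v w (n+1) = Pp G v w n * indepPoly G
      - Wt G v w n * (X * indepPoly (delNbhd G v)) := by
  rw [Pp, indepPoly]
  refine Eq.trans (sum_congr_pred _ _ _ (fun S => by simp) _)
    (Eq.trans (sum_split G v w (fun _ => True)) ?_)
  have hff : ((Finset.univ ×ˢ Finset.univ : Finset (Finset (V × Fin n) × Finset V)).filter
        (fun ST => (IsIndepFinset (concat G v w n) ST.1 ∧ IsIndepFinset G ST.2)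
          ∧ ¬ (TW w n ST.1 ∧ v ∈ ST.2)))
      = ((Finset.univ ×ˢ Finset.univ).filter
          (fun ST => IsIndepFinset (concat G v w n) ST.1 ∧ IsIndepFinset G ST.2)).filter
        (fun ST => ¬ (TW w n ST.1 ∧ v ∈ ST.2)) := by
    ext ST
    simp only [Finset.mem_filter]
    tauto
  refine Eq.trans (sum_congr_pred _ _
    (fun ST : Finset (V × Fin n) × Finset V =>
      (IsIndepFinset (concat G v w n) ST.1 ∧ IsIndepFinset G ST.2)
        ∧ ¬ (TW w n ST.1 ∧ v ∈ ST.2))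
    (fun ST => by
      constructor
      · rintro ⟨h1, h2, h3, _⟩
        exact ⟨⟨h1, h2⟩, h3⟩
      · rintro ⟨⟨h1, h2⟩, h3⟩
        exact ⟨h1, h2, h3, trivial⟩) _)
    (Eq.trans (Finset.sum_congr hff (fun _ _ => rfl)) ?_)
  have key := Finset.sum_filter_add_sum_filter_not
    ((Finset.univ ×ˢ Finset.univ : Finset (Finset (V × Fin n) × Finset V)).filter
      (fun ST => IsIndepFinset (concat G v w n) ST.1 ∧ IsIndepFinset G ST.2))
    (fun ST => TW w n ST.1 ∧ v ∈ ST.2)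
    (fun ST => (X : Polynomial ℝ)^(ST.1.card + ST.2.card))
  have t1 : ∑ ST ∈ (Finset.univ ×ˢ Finset.univ : Finset (Finset (V × Fin n) × Finset V)).filter
        (fun ST => IsIndepFinset (concat G v w n) ST.1 ∧ IsIndepFinset G ST.2),
        (X : Polynomial ℝ)^(ST.1.card + ST.2.card)
      = Pp G v w n * indepPoly G := by
    have hs : ((Finset.univ ×ˢ Finset.univ : Finset (Finset (V × Fin n) × Finset V)).filter
          (fun ST => IsIndepFinset (concat G v w n) ST.1 ∧ IsIndepFinset G ST.2))
        = Finset.univ.filter (fun S => IsIndepFinset (concat G v w n) S)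
            ×ˢ Finset.univ.filter (fun T => IsIndepFinset G T) := by
      ext ST
      simp only [Finset.mem_filter, Finset.mem_product, Finset.mem_univ, true_and]
    refine Eq.trans (Finset.sum_congr hs (fun _ _ => rfl)) ?_
    rw [prod_sum_helper, Pp, indepPoly, indepPoly]
  have t2 : ∑ ST ∈ ((Finset.univ ×ˢ Finset.univ : Finset (Finset (V × Fin n) × Finset V)).filter
        (fun ST => IsIndepFinset (concat G v w n) ST.1 ∧ IsIndepFinset G ST.2)).filter
        (fun ST => TW w n ST.1 ∧ v ∈ ST.2),
        (X : Polynomial ℝ)^(ST.1.card + ST.2.card)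
      = Wt G v w n * (X * indepPoly (delNbhd G v)) := by
    have hs : (((Finset.univ ×ˢ Finset.univ : Finset (Finset (V × Fin n) × Finset V)).filter
          (fun ST => IsIndepFinset (concat G v w n) ST.1 ∧ IsIndepFinset G ST.2)).filter
          (fun ST => TW w n ST.1 ∧ v ∈ ST.2))
        = Finset.univ.filter (fun S => IsIndepFinset (concat G v w n) S ∧ TW w n S)
            ×ˢ Finset.univ.filter (fun T => IsIndepFinset G T ∧ v ∈ T) := by
      ext ST
      simp only [Finset.mem_filter, Finset.mem_product, Finset.mem_univ, true_and]
      tauto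
    refine Eq.trans (Finset.sum_congr hs (fun _ _ => rfl)) ?_
    rw [prod_sum_helper, ← Wt, sum_indep_mem]
  rw [eq_sub_iff_add_eq, ← t1, ← t2, add_comm]
  exact key

lemma Wt_succ (hvw : G.Adj v w) (n : ℕ) :
    Wt G v w (n+1) = Pp G v w n * (X * indepPoly (delNbhd G w)) := by
  rw [Wt]
  refine Eq.trans (sum_congr_pred _ _ _ (fun S => by rw [tw_iff_topF w S]) _)
    (Eq.trans (sum_split G v w (fun T => w ∈ T)) ?_)
  have hs : ((Finset.univ ×ˢ Finset.univ : Finset (Finset (V × Fin n) × Finset V)).filter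
        (fun ST => IsIndepFinset (concat G v w n) ST.1 ∧ (IsIndepFinset G ST.2 ∧ w ∈ ST.2)))
      = Finset.univ.filter (fun S => IsIndepFinset (concat G v w n) S)
          ×ˢ Finset.univ.filter (fun T => IsIndepFinset G T ∧ w ∈ T) := by
    ext ST
    simp only [Finset.mem_filter, Finset.mem_product, Finset.mem_univ, true_and]
  refine Eq.trans (sum_congr_pred _ _
    (fun ST : Finset (V × Fin n) × Finset V =>
      IsIndepFinset (concat G v w n) ST.1 ∧ (IsIndepFinset G ST.2 ∧ w ∈ ST.2))
    (fun ST => by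
      constructor
      · rintro ⟨h1, h2, _, h4⟩
        exact ⟨h1, h2, h4⟩
      · rintro ⟨h1, h2, h4⟩
        refine ⟨h1, h2, ?_, h4⟩
        rintro ⟨_, hv⟩
        exact h2 v hv w h4 hvw) _)
    (Eq.trans (Finset.sum_congr hs (fun _ _ => rfl)) ?_)
  rw [prod_sum_helper, sum_indep_mem, ← indepPoly, ← Pp]

lemma Pp_rec (hvw : G.Adj v w) (n : ℕ) :
    Pp G v w (n+2) = indepPoly G * Pp G v w (n+1)
      - (X^2 * indepPoly (delNbhd G v) * indepPoly (delNbhd G w)) * Pp G v w n := by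
  rw [Pp_succ, Wt_succ G v w hvw]
  ring

lemma Pp_one : Pp G v w 1 = indepPoly G := by
  have h := Pp_succ G v w 0
  rw [Pp_zero, Wt_zero] at h
  rw [h]
  ring

end Rec


/-- Theorem (Galvin–Hilyard, "thm-tech"). If `p(G,x)` is LC⁺ and
`p(G,x)² - 4qx² p(G-N[v],x) p(G-N[w],x)` is LC⁺ for all `q ∈ [0,1]`, then for every `n ≥ 1`
the independent set sequence of the `n`-concatenation `G^n(v,w)` is log-concave. -/
theorem indepSeq_concat_logConcave_of_LCPlus {V : Type*} [Fintype V]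
    (G : SimpleGraph V) (v w : V) (hvw : G.Adj v w)
    (hG : LCPlus (indepPoly G))
    (hq : ∀ q : ℝ, 0 ≤ q → q ≤ 1 →
      LCPlus (indepPoly G ^ 2 -
        C (4 * q) * X ^ 2 * indepPoly (delNbhd G v) * indepPoly (delNbhd G w)))
    (n : ℕ) (hn : 1 ≤ n) :
    ∀ t : ℕ, indepCount (concat G v w n) t * indepCount (concat G v w n) (t + 2) ≤
      indepCount (concat G v w n) (t + 1) ^ 2 := by
  intro t
  have hP : LCPlus (Pp G v w n) := by
    have closed := P_closed (indepPoly G)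
      (X^2 * indepPoly (delNbhd G v) * indepPoly (delNbhd G w)) (Pp G v w)
      (Pp_zero G v w) (Pp_one G v w) (Pp_rec G v w hvw) n
    rw [closed]
    apply LCPlus.mul
    · rcases Nat.mod_two_eq_zero_or_one n with h | h <;> rw [h]
      · rw [pow_zero]
        exact LCPlus.one
      · rw [pow_one]
        exact hG
    · apply LCPlus.prod
      intro j _
      have hq0 : (0:ℝ) ≤ Real.cos (cangle n j)^2 := sq_nonneg _
      have hq1 : Real.cos (cangle n j)^2 ≤ 1 := by
        nlinarith [Real.neg_one_le_cos (cangle n j), Real.cos_le_one (cangle n j)]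
      have h := hq _ hq0 hq1
      convert h using 1
      ring
  have hc : ∀ s : ℕ, (Pp G v w n).coeff s = (indepCount (concat G v w n) s : ℝ) := by
    intro s
    rw [Pp]
    exact coeff_indepPoly _ s
  have key := hP.2 t
  rw [hc t, hc (t+2), hc (t+1)] at key
  exact_mod_cast key
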